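/- For every α ∈ (0,1/2), the set 𝒲₁ is a compact subset of the Banach space of bounded continuous functions on ℝ equipped with the sup-norm; in particular, every sequence in 𝒲₁ admits a subsequence converging uniformly on ℝ to an element of 𝒲₁. -/

import Mathlib

open Real MeasureTheory Set Filter BoundedContinuousFunction Topology

noncomputable section

namespace GSQGhalfplane

/-- The constant `c_{0,α} = 2^{2α-1} Γ(1+α) / (π Γ(1-α))`. -/
def C0 (α : ℝ) : ℝ := (2:ℝ) ^ (2*α - 1) * Real.Gamma (1 + α) / (π * Real.Gamma (1 - α))

/-- The constant `c'''_{0,α}`. -/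
def C3 (α : ℝ) : ℝ :=
  ((4:ℝ) ^ (1 + α) - 4 + α - 4*α^3) * Real.Gamma α /
    (2*π*α*(5 - 2*α)*(3 - 2*α)*(1 - 2*α)*Real.Gamma (2 - α))

/-- The exponent `δ_u = c'''_{0,α} t₀^{1/2-α} / (1 + c'''_{0,α} t₀^{1/2-α})`. -/
def deltaU (α t0 : ℝ) : ℝ :=
  C3 α * t0 ^ (1/2 - α) / (1 + C3 α * t0 ^ (1/2 - α))

/-- The lower barrier `f_l(x) = (1 + t₀^{-2} x²)^{-δ_l}`. -/
def fl (t0 δl x : ℝ) : ℝ := (1 + x^2 / t0^2) ^ (-δl)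

/-- The upper barrier `f_u(x) = min(1, t₀^{δ_u} |x|^{-δ_u})` (with value `1` at `x = 0`). -/
def fu (α t0 x : ℝ) : ℝ :=
  if x = 0 then 1 else min 1 (t0 ^ deltaU α t0 * |x| ^ (-(deltaU α t0)))

/-- The invariant set `𝒲₁`: even continuous bounded functions with `f(0)=1`,
nonnegative and non-increasing on `[0,∞)`, `x ↦ f(√x)` convex,
`f_l ≤ f ≤ f_u`, and left derivative at `t₀` at most `-t₀^{α-3/2}`. -/
def W1 (α t0 δl : ℝ) (f : ℝ → ℝ) : Prop :=
  Continuous f ∧ (∃ M : ℝ, ∀ x : ℝ, |f x| ≤ M) ∧ (∀ x : ℝ, f (-x) = f x) ∧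
  f 0 = 1 ∧ (∀ x ∈ Ici (0:ℝ), 0 ≤ f x) ∧ AntitoneOn f (Ici (0:ℝ)) ∧
  ConvexOn ℝ (Ici (0:ℝ)) (fun x => f (Real.sqrt x)) ∧
  (∀ x : ℝ, fl t0 δl x ≤ f x) ∧ (∀ x : ℝ, f x ≤ fu α t0 x) ∧
  (∃ d : ℝ, HasDerivWithinAt f d (Iio t0) t0 ∧ d ≤ -(t0 ^ (α - 3/2)))

/-- The linear operator `𝔗_α(f)`, defined for `x > 0`, set to `0` at `x = 0`,
and extended evenly to `ℝ` (via `|x|`). -/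
def Tfr (α : ℝ) (f : ℝ → ℝ) (x : ℝ) : ℝ :=
  if x = 0 then 0
  else (C0 α / α) * ∫ ξ in Ioi (0:ℝ),
    f ξ * (4*α * ξ ^ (-(2*α)) - (ξ / |x|) * (|(|x| - ξ)| ^ (-(2*α)) - (|x| + ξ) ^ (-(2*α))))

/-- The nonlinear map `ℜ_α(f)(x) = exp(-∫₀^{|x|} 𝔗_α(f)(y)/(y(1+𝔗_α(f)(y))) dy)`. -/
def Rfr (α : ℝ) (f : ℝ → ℝ) (x : ℝ) : ℝ :=
  Real.exp (-(∫ y in (0:ℝ)..|x|, Tfr α f y / (y * (1 + Tfr α f y))))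

/-- The functional `𝔟(f) = 4 c_{0,α} ∫₀^∞ f(ξ) ξ^{-2α} dξ`. -/
def bfr (α : ℝ) (f : ℝ → ℝ) : ℝ := 4 * C0 α * ∫ ξ in Ioi (0:ℝ), f ξ * ξ ^ (-(2*α))

/-- The functional `𝔠(f) = (8(1+2α)(1+α)/3) c_{0,α} ∫₀^∞ (1-f(ξ)) ξ^{-2-2α} dξ`. -/
def cfr (α : ℝ) (f : ℝ → ℝ) : ℝ :=
  (8*(1+2*α)*(1+α)/3) * C0 α * ∫ ξ in Ioi (0:ℝ), (1 - f ξ) * ξ ^ (-2 - 2*α)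

/-- The lower bound `b'_α`. -/
def bLow (α t0 δl : ℝ) : ℝ :=
  2 * C0 α * t0 ^ (1 - 2*α) * Real.Gamma (1/2 - α) * Real.Gamma (α + δl - 1/2) /
    Real.Gamma δl

/-- The upper bound `b''_α`. -/
def bHigh (α t0 : ℝ) : ℝ :=
  4 * C0 α * t0 ^ (1 - 2*α) * (1/(1 - 2*α) + 1/(deltaU α t0 + 2*α - 1))

/-- The upper bound `c''_{0,α}`. -/
def cHigh (α t0 δl : ℝ) : ℝ :=
  C0 α * t0 ^ (-1 - 2*α) * 8 * (1 + α) * Real.Gamma (1/2 - α) *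
    Real.Gamma (δl + α + 1/2) / (3 * Real.Gamma δl)

lemma C3_pos {α : ℝ} (hα : α ∈ Ioo (0:ℝ) (1/2)) : 0 < C3 α := by
  obtain ⟨h1, h2⟩ := hα
  have h4 : (4:ℝ) ^ (1:ℝ) ≤ (4:ℝ) ^ (1 + α) :=
    Real.rpow_le_rpow_of_exponent_le (by norm_num) (by linarith)
  rw [Real.rpow_one] at h4
  have hnum : 0 < ((4:ℝ) ^ (1 + α) - 4 + α - 4*α^3) := by nlinarith [mul_pos h1 (show (0:ℝ) < 1 - 4*α^2 by nlinarith)]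
  have hg : 0 < Real.Gamma α := Real.Gamma_pos_of_pos h1
  have hg2 : 0 < Real.Gamma (2 - α) := Real.Gamma_pos_of_pos (by linarith)
  have hπ := Real.pi_pos
  exact div_pos (mul_pos hnum hg)
    (mul_pos (mul_pos (mul_pos (mul_pos (mul_pos (mul_pos two_pos hπ) h1)
      (by linarith)) (by linarith)) (by linarith)) hg2)

lemma deltaU_pos {α t0 : ℝ} (hα : α ∈ Ioo (0:ℝ) (1/2)) (ht0 : 1 < t0) :
    0 < deltaU α t0 := by
  have hc : 0 < C3 α * t0 ^ (1/2 - α) :=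
    mul_pos (C3_pos hα) (Real.rpow_pos_of_pos (by linarith) _)
  exact div_pos hc (by linarith)


lemma fu_le_one (α t0 x : ℝ) : fu α t0 x ≤ 1 := by
  unfold fu; split
  · exact le_refl 1
  · exact min_le_left _ _

lemma fl_pos {t0 δl : ℝ} (ht0 : 0 < t0) (x : ℝ) : 0 < fl t0 δl x := by
  have : (0:ℝ) < 1 + x^2/t0^2 := by positivity
  exact Real.rpow_pos_of_pos this _

section W1facts

variable {α t0 δl : ℝ} {f : ℝ → ℝ}

lemma W1.le_one (hf : W1 α t0 δl f) (x : ℝ) : f x ≤ 1 :=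
  (hf.2.2.2.2.2.2.2.2.1 x).trans (fu_le_one α t0 x)

lemma W1.nonneg (ht0 : 0 < t0) (hf : W1 α t0 δl f) (x : ℝ) : 0 ≤ f x :=
  ((fl_pos ht0 x).trans_le (hf.2.2.2.2.2.2.2.1 x)).le

lemma W1.even_abs (hf : W1 α t0 δl f) (x : ℝ) : f |x| = f x := by
  rcases abs_cases x with ⟨h, _⟩ | ⟨h, _⟩
  · rw [h]
  · rw [h]; exact hf.2.2.1 x

lemma W1.tail (ht0 : 0 < t0) (hδu : 0 ≤ deltaU α t0) (hf : W1 α t0 δl f)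
    {A x : ℝ} (hA : 0 < A) (hx : A ≤ |x|) :
    f x ≤ t0 ^ deltaU α t0 * A ^ (-(deltaU α t0)) := by
  have hx0 : x ≠ 0 := by
    intro h; rw [h, abs_zero] at hx; linarith
  calc f x ≤ fu α t0 x := hf.2.2.2.2.2.2.2.2.1 x
    _ = min 1 (t0 ^ deltaU α t0 * |x| ^ (-(deltaU α t0))) := by rw [fu, if_neg hx0]
    _ ≤ t0 ^ deltaU α t0 * |x| ^ (-(deltaU α t0)) := min_le_right _ _
    _ ≤ t0 ^ deltaU α t0 * A ^ (-(deltaU α t0)) := by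
        apply mul_le_mul_of_nonneg_left _ (Real.rpow_nonneg ht0.le _)
        exact Real.rpow_le_rpow_of_nonpos hA hx (neg_nonpos.mpr hδu)

lemma W1.lip (ht0 : 0 < t0) (hf : W1 α t0 δl f) {r x y : ℝ}
    (hr : 0 < r) (hrx : r ≤ x) (hxy : x ≤ y) :
    f x - f y ≤ 2/r^2 * (y^2 - x^2) := by
  rcases eq_or_lt_of_le hxy with rfl | hxy
  · simp
  have hconv := hf.2.2.2.2.2.2.1
  have hx0 : 0 < x := hr.trans_le hrx
  have hgx : f (Real.sqrt (x^2)) = f x := by rw [Real.sqrt_sq hx0.le]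
  have hgy : f (Real.sqrt (y^2)) = f y := by rw [Real.sqrt_sq (hx0.trans hxy).le]
  have h1 : r^2/2 < x^2 := by nlinarith
  have h2 : x^2 < y^2 := by nlinarith
  have key := hconv.slope_mono_adjacent (x := r^2/2) (y := x^2) (z := y^2)
    (by simp [mem_Ici]; positivity) (by simp [mem_Ici]; positivity) h1 h2
  simp only [hgx, hgy] at key
  have hub : f (Real.sqrt (r^2/2)) ≤ 1 := hf.le_one _
  have hlb : 0 ≤ f x := hf.nonneg ht0 x
  have hden : r^2/2 ≤ x^2 - r^2/2 := by nlinarith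
  have hLHS : -(2/r^2) ≤ (f x - f (Real.sqrt (r^2/2))) / (x^2 - r^2/2) := by
    rw [neg_le, ← neg_div]
    have hpos : (0:ℝ) < x^2 - r^2/2 := by nlinarith
    rw [div_le_div_iff₀ hpos (by positivity : (0:ℝ) < r^2)]
    nlinarith
  have hfin : -(2/r^2) ≤ (f y - f x) / (y^2 - x^2) := hLHS.trans key
  have hpos2 : (0:ℝ) < y^2 - x^2 := by nlinarith
  rw [le_div_iff₀ hpos2] at hfin
  nlinarith

end W1facts

/-- slope-type quotient through `t0`. -/
def sigmaf (t0 : ℝ) (f : ℝ → ℝ) (s : ℝ) : ℝ := (f s - f t0) / (s^2 - t0^2)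

lemma sigma_mono {t0 : ℝ} {f : ℝ → ℝ}
    (hconv : ConvexOn ℝ (Ici (0:ℝ)) (fun x => f (Real.sqrt x))) (ht0 : 0 < t0)
    {s1 s2 : ℝ} (h0 : 0 ≤ s1) (h12 : s1 ≤ s2) (h2 : s2 < t0) :
    sigmaf t0 f s1 ≤ sigmaf t0 f s2 := by
  have hmono := hconv.slope_mono (x := t0^2) (by simp [mem_Ici]; positivity)
  have hs1 : s1^2 < t0^2 := by nlinarith
  have hs2 : s2^2 < t0^2 := by nlinarith
  have key := hmono (a := s1^2) (b := s2^2)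
    ⟨by simp [mem_Ici]; positivity, by simp [mem_singleton_iff]; exact hs1.ne⟩
    ⟨by simp [mem_Ici]; positivity, by simp [mem_singleton_iff]; exact hs2.ne⟩
    (by nlinarith)
  rw [slope_def_field, slope_def_field] at key
  simp only [Real.sqrt_sq h0, Real.sqrt_sq (h0.trans h12), Real.sqrt_sq ht0.le] at key
  exact key

lemma sigma_slope_eq {t0 : ℝ} (f : ℝ → ℝ) (s : ℝ) :
    sigmaf t0 f s = slope f t0 s / (s + t0) := by
  rw [slope_def_field, sigmaf, div_div]
  congr 1
  ring


lemma W1.sigma_le {α t0 δl : ℝ} {f : ℝ → ℝ} (ht0 : 0 < t0) (hf : W1 α t0 δl f)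
    {s : ℝ} (hs0 : 0 ≤ s) (hst : s < t0) :
    sigmaf t0 f s ≤ -(t0 ^ (α - 3/2)) / (2*t0) := by
  obtain ⟨d, hd, hdle⟩ := hf.2.2.2.2.2.2.2.2.2
  have hconv := hf.2.2.2.2.2.2.1
  have hslope : Tendsto (slope f t0) (𝓝[<] t0) (𝓝 d) := by
    have h1 := hasDerivWithinAt_iff_tendsto_slope.mp hd
    rwa [diff_singleton_eq_self (by simp : t0 ∉ Iio t0)] at h1
  have hden : Tendsto (fun s' : ℝ => s' + t0) (𝓝[<] t0) (𝓝 (2*t0)) := by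
    have h2 : Tendsto (fun s' : ℝ => s' + t0) (𝓝 t0) (𝓝 (t0 + t0)) :=
      (continuous_id.add continuous_const).tendsto t0
    rw [show t0 + t0 = 2*t0 by ring] at h2
    exact h2.mono_left nhdsWithin_le_nhds
  have hφ : Tendsto (fun s' => slope f t0 s' / (s' + t0)) (𝓝[<] t0) (𝓝 (d/(2*t0))) :=
    hslope.div hden (by positivity)
  have hle : sigmaf t0 f s ≤ d/(2*t0) := by
    refine ge_of_tendsto hφ ?_
    filter_upwards [Ioo_mem_nhdsLT_of_mem (show t0 ∈ Ioc s t0 from ⟨hst, le_rfl⟩)] with s' hs'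
    calc sigmaf t0 f s ≤ sigmaf t0 f s' := sigma_mono hconv ht0 hs0 hs'.1.le hs'.2
      _ = slope f t0 s' / (s' + t0) := sigma_slope_eq f s'
  refine hle.trans ?_
  exact div_le_div_of_nonneg_right hdle (by positivity) |>.trans_eq rfl

lemma exists_deriv_of_sigma {t0 c : ℝ} {f : ℝ → ℝ}
    (hconv : ConvexOn ℝ (Ici (0:ℝ)) (fun x => f (Real.sqrt x))) (ht0 : 0 < t0)
    (hσ : ∀ s, 0 ≤ s → s < t0 → sigmaf t0 f s ≤ -c/(2*t0)) :
    ∃ d : ℝ, HasDerivWithinAt f d (Iio t0) t0 ∧ d ≤ -c := by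
  set τ : ℝ → ℝ := fun s => sigmaf t0 f (max s 0) with hτ
  have hmono : MonotoneOn τ (Iio t0) := by
    intro s1 h1 s2 h2 h12
    exact sigma_mono hconv ht0 (le_max_right _ _) (max_le_max h12 le_rfl)
      (max_lt h2 ht0)
  have hbdd : BddAbove (τ '' Iio t0) := by
    refine ⟨-c/(2*t0), ?_⟩
    rintro _ ⟨s, hs, rfl⟩
    exact hσ _ (le_max_right _ _) (max_lt hs ht0)
  have htend := hmono.tendsto_nhdsLT hbdd
  set L := sSup (τ '' Iio t0) with hL
  have hLle : L ≤ -c/(2*t0) := by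
    refine csSup_le ⟨τ 0, mem_image_of_mem _ ht0⟩ ?_
    rintro _ ⟨s, hs, rfl⟩
    exact hσ _ (le_max_right _ _) (max_lt hs ht0)
  refine ⟨2*t0*L, ?_, ?_⟩
  · rw [hasDerivWithinAt_iff_tendsto_slope,
      diff_singleton_eq_self (by simp : t0 ∉ Iio t0)]
    have hden : Tendsto (fun s' : ℝ => s' + t0) (𝓝[<] t0) (𝓝 (2*t0)) := by
      have h2 : Tendsto (fun s' : ℝ => s' + t0) (𝓝 t0) (𝓝 (t0 + t0)) :=
        (continuous_id.add continuous_const).tendsto t0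
      rw [show t0 + t0 = 2*t0 by ring] at h2
      exact h2.mono_left nhdsWithin_le_nhds
    have h2 : Tendsto (fun s => τ s * (s + t0)) (𝓝[<] t0) (𝓝 (L * (2*t0))) :=
      htend.mul hden
    rw [show L * (2*t0) = 2*t0*L by ring] at h2
    refine h2.congr' ?_
    filter_upwards [Ioo_mem_nhdsLT_of_mem (show t0 ∈ Ioc 0 t0 from ⟨ht0, le_rfl⟩)] with s hs
    have hmax : max s 0 = s := max_eq_left hs.1.le
    rw [hτ]
    simp only [hmax]
    rw [sigma_slope_eq f s, div_mul_cancel₀]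
    exact ne_of_gt (by linarith [hs.1])
  · have h3 : 2*t0*L ≤ 2*t0*(-c/(2*t0)) := mul_le_mul_of_nonneg_left hLle (by positivity)
    have h4 : 2*t0*(-c/(2*t0)) = -c := by
      field_simp
    linarith

lemma fl_ge {t0 δl : ℝ} (ht0 : 0 < t0) (hδl : 0 ≤ δl) (x : ℝ) :
    1 - δl * x^2 / t0^2 ≤ fl t0 δl x := by
  set u := x^2/t0^2 with hu
  have hu0 : 0 ≤ u := by positivity
  have h1u : (0:ℝ) < 1 + u := by linarith
  have hgoal : δl * x^2 / t0^2 = δl * u := by rw [hu]; ring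
  rw [hgoal, fl, ← hu, Real.rpow_def_of_pos h1u]
  have hlog : Real.log (1+u) ≤ u := by
    have := Real.log_le_sub_one_of_pos h1u; linarith
  have hlog0 : 0 ≤ Real.log (1+u) := Real.log_nonneg (by linarith)
  have h2 : -(δl*u) ≤ Real.log (1+u) * (-δl) := by nlinarith
  calc 1 - δl * u = -(δl*u) + 1 := by ring
    _ ≤ Real.log (1+u) * (-δl) + 1 := by linarith
    _ ≤ Real.exp (Real.log (1+u) * (-δl)) := Real.add_one_le_exp _


set_option maxHeartbeats 2000000 in
/-- `𝒲₁` is a compact subset of the Banach space of bounded continuous functions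
on `ℝ` with the sup-norm; in particular every sequence in `𝒲₁` admits a
subsequence converging uniformly on `ℝ` to an element of `𝒲₁`. -/
theorem W1_compact (α t0 δl : ℝ) (hα : α ∈ Ioo (0:ℝ) (1/2)) (ht0 : 1 < t0)
    (ht1 : max (1 / C3 α) ((1 - 2*α) / (2*α * C3 α)) < t0 ^ (1/2 - α))
    (ht2 : (2:ℝ) ^ ((2:ℝ) ^ α + 2) * Real.Gamma (2 + α) * Real.Gamma (1/2 - α) /
        (3*π*α*Real.Gamma (1 - α)) < t0 ^ (1/2 + α))
    (hδl : 1/2 ≤ δl)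
    (hδ1 : (2:ℝ) ^ (2*α) * Real.Gamma (2 + α) * Real.Gamma (1/2 - α) /
        (3*π*Real.Gamma (1 - α)) ≤
        Real.Gamma (δl + 1) * t0 ^ (2*α - 1) / Real.Gamma (δl + α + 1/2))
    (hδ2 : Real.Gamma (δl + 1) * t0 ^ (2*α - 1) / Real.Gamma (δl + α + 1/2) ≤
        (2:ℝ) ^ (2*α + 1) * Real.Gamma (2 + α) * Real.Gamma (1/2 - α) /
        (3*π*Real.Gamma (1 - α))) :
    IsCompact {F : ℝ →ᵇ ℝ | W1 α t0 δl ⇑F} ∧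
    ∀ u : ℕ → ℝ → ℝ, (∀ n, W1 α t0 δl (u n)) →
      ∃ g : ℝ → ℝ, W1 α t0 δl g ∧ ∃ φ : ℕ → ℕ, StrictMono φ ∧
        TendstoUniformly (fun n => u (φ n)) g atTop := by
  obtain ⟨hα0, hα2⟩ := hα
  have ht0' : (0:ℝ) < t0 := by linarith
  have hδl0 : (0:ℝ) < δl := by linarith
  have hδu : 0 < deltaU α t0 := deltaU_pos ⟨hα0, hα2⟩ ht0
  set S : Set (ℝ →ᵇ ℝ) := {F : ℝ →ᵇ ℝ | W1 α t0 δl ⇑F} with hSdef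
  have hclosed : IsClosed S := by
    refine IsSeqClosed.isClosed ?_
    intro F G hFS hFG
    have hW : ∀ n, W1 α t0 δl ⇑(F n) := fun n => hFS n
    have hpt : ∀ x : ℝ, Tendsto (fun n => F n x) atTop (𝓝 (G x)) := fun x =>
      ((tendsto_iff_tendstoUniformly.mp hFG).tendsto_at x)
    have heven : ∀ x : ℝ, G (-x) = G x := by
      intro x
      have h1 : Tendsto (fun n => F n (-x)) atTop (𝓝 (G x)) :=
        (hpt x).congr fun n => ((hW n).2.2.1 x).symm
      exact tendsto_nhds_unique (hpt (-x)) h1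
    have hzero : G 0 = 1 := by
      have h1 : Tendsto (fun n => F n 0) atTop (𝓝 (1:ℝ)) :=
        tendsto_const_nhds.congr fun n => ((hW n).2.2.2.1).symm
      exact tendsto_nhds_unique (hpt 0) h1
    have hnonneg : ∀ x ∈ Ici (0:ℝ), 0 ≤ G x := fun x hx =>
      ge_of_tendsto (hpt x) (Eventually.of_forall fun n => (hW n).2.2.2.2.1 x hx)
    have hanti : AntitoneOn (⇑G) (Ici (0:ℝ)) := by
      intro x hx y hy hxy
      exact le_of_tendsto_of_tendsto' (hpt y) (hpt x)
        fun n => (hW n).2.2.2.2.2.1 hx hy hxy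
    have hconv : ConvexOn ℝ (Ici (0:ℝ)) (fun x => G (Real.sqrt x)) := by
      refine ⟨convex_Ici 0, ?_⟩
      intro x hx y hy a b ha hb hab
      simp only [smul_eq_mul]
      refine le_of_tendsto_of_tendsto' (hpt (Real.sqrt (a*x + b*y)))
        (((hpt (Real.sqrt x)).const_mul a).add ((hpt (Real.sqrt y)).const_mul b)) ?_
      intro n
      have h2 := ((hW n).2.2.2.2.2.2.1).2 hx hy ha hb hab
      simpa only [smul_eq_mul] using h2
    have hfl : ∀ x : ℝ, fl t0 δl x ≤ G x := fun x =>
      ge_of_tendsto (hpt x) (Eventually.of_forall fun n => (hW n).2.2.2.2.2.2.2.1 x)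
    have hfu : ∀ x : ℝ, G x ≤ fu α t0 x := fun x =>
      le_of_tendsto (hpt x) (Eventually.of_forall fun n => (hW n).2.2.2.2.2.2.2.2.1 x)
    have hσ : ∀ s, 0 ≤ s → s < t0 → sigmaf t0 (⇑G) s ≤ -(t0^(α - 3/2))/(2*t0) := by
      intro s hs0 hst
      have T : Tendsto (fun n => sigmaf t0 (⇑(F n)) s) atTop (𝓝 (sigmaf t0 (⇑G) s)) :=
        ((hpt s).sub (hpt t0)).div_const _
      exact le_of_tendsto T (Eventually.of_forall fun n =>
        W1.sigma_le ht0' (hW n) hs0 hst)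
    exact ⟨G.continuous, ⟨‖G‖, fun x => by
        simpa [Real.norm_eq_abs] using G.norm_coe_le_norm x⟩,
      heven, hzero, hnonneg, hanti, hconv, hfl, hfu,
      exists_deriv_of_sigma hconv ht0' hσ⟩
  have htb : TotallyBounded S := by
    rw [Metric.totallyBounded_iff]
    intro ε hε
    set ε' : ℝ := ε/8 with hε'def
    have hε'0 : 0 < ε' := by positivity
    set A : ℝ := t0 * max 1 ((1/ε') ^ (1/deltaU α t0 : ℝ)) with hAdef
    have hA1 : t0 ≤ A := le_mul_of_one_le_right ht0'.le (le_max_left _ _)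
    have hA0 : (0:ℝ) < A := ht0'.trans_le hA1
    have hA1' : (1:ℝ) ≤ A := ht0.le.trans hA1
    have htail : ∀ F : ℝ →ᵇ ℝ, F ∈ S → ∀ x : ℝ, A ≤ |x| → F x ≤ ε' := by
      intro F hF x hx
      have hF' : W1 α t0 δl ⇑F := hF
      have h1 : F x ≤ t0 ^ deltaU α t0 * A ^ (-(deltaU α t0)) :=
        W1.tail ht0' hδu.le hF' hA0 hx
      rcases le_or_gt (1:ℝ) ε' with hcase | hcase
      · exact (hF'.le_one x).trans hcase
      · have hinv : (1:ℝ) ≤ (1/ε') ^ (1/deltaU α t0 : ℝ) := by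
          calc (1:ℝ) = (1:ℝ) ^ (1/deltaU α t0 : ℝ) := (Real.one_rpow _).symm
            _ ≤ (1/ε') ^ (1/deltaU α t0 : ℝ) :=
              Real.rpow_le_rpow zero_le_one
                (by rw [le_div_iff₀ hε'0]; linarith) (by positivity)
        have hAeq : A = t0 * (1/ε') ^ (1/deltaU α t0 : ℝ) := by
          rw [hAdef, max_eq_right hinv]
        have h2 : t0 ^ deltaU α t0 * A ^ (-(deltaU α t0)) = ε' := by
          rw [hAeq, Real.mul_rpow ht0'.le (by positivity)]
          have e1 : ((1/ε') ^ (1/deltaU α t0 : ℝ)) ^ (-(deltaU α t0)) = ε' := by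
            rw [← Real.rpow_mul (by positivity : (0:ℝ) ≤ 1/ε'),
              show (1/deltaU α t0) * (-(deltaU α t0)) = -1 by field_simp,
              Real.rpow_neg_one, one_div, inv_inv]
          have e2 : t0 ^ deltaU α t0 * t0 ^ (-(deltaU α t0)) = 1 := by
            rw [← Real.rpow_add ht0']; simp
          rw [e1, ← mul_assoc, e2, one_mul]
        linarith
    set r : ℝ := min 1 (t0 * Real.sqrt (ε'/(2*δl))) with hrdef
    have hr0 : 0 < r := lt_min one_pos (mul_pos ht0' (Real.sqrt_pos.mpr (by positivity)))
    have hr1 : r ≤ 1 := min_le_left _ _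
    have hrA : r ≤ A := hr1.trans hA1'
    have hrmod : δl * r^2 / t0^2 ≤ ε'/2 := by
      have h2 : r ≤ t0 * Real.sqrt (ε'/(2*δl)) := min_le_right _ _
      have h3 : Real.sqrt (ε'/(2*δl)) ^ 2 = ε'/(2*δl) := Real.sq_sqrt (by positivity)
      have h4 : r^2 ≤ t0^2 * (ε'/(2*δl)) := by
        nlinarith [hr0.le, Real.sqrt_nonneg (ε'/(2*δl))]
      rw [div_le_iff₀ (by positivity : (0:ℝ) < t0^2)]
      calc δl * r^2 ≤ δl * (t0^2*(ε'/(2*δl))) := by nlinarith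
        _ = ε'/2 * t0^2 := by field_simp
    have hnear : ∀ F : ℝ →ᵇ ℝ, F ∈ S → ∀ x : ℝ, 1 - F x ≤ δl * x^2/t0^2 := by
      intro F hF x
      have hF' : W1 α t0 δl ⇑F := hF
      have h1 := fl_ge ht0' hδl0.le (δl := δl) x
      have h2 := hF'.2.2.2.2.2.2.2.1 x
      linarith
    set Lc : ℝ := 4*A/r^2 with hLdef
    have hL0 : 0 < Lc := by positivity
    set hgap : ℝ := ε'/(2*Lc) with hgapdef
    have hgap0 : 0 < hgap := by positivity
    have hmod : ∀ F : ℝ →ᵇ ℝ, F ∈ S → ∀ x y : ℝ,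
        0 ≤ x → x ≤ y → y ≤ A → y - x ≤ hgap → F x - F y ≤ ε' := by
      intro F hF x y hx hxy hyA hyxh
      have hF' : W1 α t0 δl ⇑F := hF
      have hLh : Lc * hgap = ε'/2 := by
        rw [hgapdef]; field_simp
      rcases le_or_gt y r with hyr | hyr
      · have h1 := hnear F hF y
        have h2 : δl * y^2/t0^2 ≤ δl*r^2/t0^2 := by
          have hy2 : y^2 ≤ r^2 := by nlinarith
          apply div_le_div_of_nonneg_right _ (by positivity)
          exact mul_le_mul_of_nonneg_left hy2 hδl0.le
        have h3 := hF'.le_one x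
        linarith
      · rcases le_or_gt r x with hrx | hrx
        · have hlip := W1.lip ht0' hF' hr0 hrx hxy
          have h2 : y^2 - x^2 ≤ 2*A*hgap := by nlinarith
          have h3 : 2/r^2*(y^2-x^2) ≤ 2/r^2*(2*A*hgap) := by
            apply mul_le_mul_of_nonneg_left h2 (by positivity)
          have h4 : 2/r^2*(2*A*hgap) = Lc*hgap := by rw [hLdef]; ring
          linarith
        · have h1 : F x - F r ≤ ε'/2 := by
            have := hnear F hF r
            have h3 := hF'.le_one x
            linarith
          have hlip := W1.lip ht0' hF' hr0 le_rfl hyr.le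
          have h2 : y^2 - r^2 ≤ 2*A*hgap := by nlinarith
          have h3 : 2/r^2*(y^2-r^2) ≤ 2/r^2*(2*A*hgap) := by
            apply mul_le_mul_of_nonneg_left h2 (by positivity)
          have h4 : 2/r^2*(2*A*hgap) = Lc*hgap := by rw [hLdef]; ring
          linarith
    set n : ℕ := ⌈A/hgap⌉₊ with hndef
    set m : ℕ := ⌈1/ε'⌉₊ with hmdef
    classical
    set code : (ℝ →ᵇ ℝ) → (Fin (n+1) → Fin (m+1)) := fun F i =>
      ⟨min ⌊(F (((i:ℕ):ℝ)*hgap))/ε'⌋₊ m, Nat.lt_succ_of_le (min_le_right _ _)⟩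
      with hcodedef
    have hfloor_le : ∀ F : ℝ →ᵇ ℝ, F ∈ S → ∀ i : Fin (n+1),
        ⌊(F (((i:ℕ):ℝ)*hgap))/ε'⌋₊ ≤ m := by
      intro F hF i
      have hF' : W1 α t0 δl ⇑F := hF
      have h1 : (F (((i:ℕ):ℝ)*hgap) : ℝ)/ε' ≤ 1/ε' := by
        gcongr
        exact hF'.le_one _
      exact (Nat.floor_le_floor h1).trans (Nat.floor_le_ceil _)
    have hquant : ∀ a b : ℝ, 0 ≤ a → 0 ≤ b → ⌊a/ε'⌋₊ = ⌊b/ε'⌋₊ → |a - b| ≤ ε' := by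
      intro a b ha hb hab
      have h1 : (⌊a/ε'⌋₊ : ℝ) ≤ a/ε' := Nat.floor_le (by positivity)
      have h2 : a/ε' < ⌊a/ε'⌋₊ + 1 := Nat.lt_floor_add_one _
      have h3 : (⌊b/ε'⌋₊ : ℝ) ≤ b/ε' := Nat.floor_le (by positivity)
      have h4 : b/ε' < ⌊b/ε'⌋₊ + 1 := Nat.lt_floor_add_one _
      rw [hab] at h1 h2
      have h5 : (⌊b/ε'⌋₊:ℝ) * ε' ≤ a := (le_div_iff₀ hε'0).mp h1
      have h6 : a < ((⌊b/ε'⌋₊:ℝ) + 1) * ε' := (div_lt_iff₀ hε'0).mp h2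
      have h7 : (⌊b/ε'⌋₊:ℝ) * ε' ≤ b := (le_div_iff₀ hε'0).mp h3
      have h8 : b < ((⌊b/ε'⌋₊:ℝ) + 1) * ε' := (div_lt_iff₀ hε'0).mp h4
      rw [abs_le]
      constructor <;> nlinarith
    have hkey : ∀ F G : ℝ →ᵇ ℝ, F ∈ S → G ∈ S → code F = code G →
        dist F G ≤ 3*ε' := by
      intro F G hF hG hcodeEq
      have hF' : W1 α t0 δl ⇑F := hF
      have hG' : W1 α t0 δl ⇑G := hG
      rw [BoundedContinuousFunction.dist_le (by positivity)]
      intro x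
      rw [Real.dist_eq, ← W1.even_abs hF' x, ← W1.even_abs hG' x]
      set z : ℝ := |x| with hzdef
      have hz0 : 0 ≤ z := abs_nonneg x
      rcases le_or_gt z A with hzA | hzA
      · set i : ℕ := ⌊z/hgap⌋₊ with hidef
        have hin : i < n + 1 := by
          apply Nat.lt_succ_of_le
          calc i ≤ ⌊A/hgap⌋₊ := Nat.floor_le_floor (by gcongr)
            _ ≤ n := Nat.floor_le_ceil _
        set xi : ℝ := (i:ℝ)*hgap with hxidef
        have hxi0 : 0 ≤ xi := by positivity
        have hxi_le : xi ≤ z := by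
          rw [hxidef]
          exact (le_div_iff₀ hgap0).mp (Nat.floor_le (by positivity))
        have hz_xi : z - xi ≤ hgap := by
          have h9 := Nat.lt_floor_add_one (z/hgap)
          rw [div_lt_iff₀ hgap0] at h9
          rw [hxidef]; push_cast at h9 ⊢; nlinarith
        have hcd := congrFun hcodeEq (⟨i, hin⟩ : Fin (n+1))
        rw [hcodedef] at hcd
        simp only [Fin.mk.injEq] at hcd
        rw [min_eq_left (hfloor_le F hF ⟨i, hin⟩),
          min_eq_left (hfloor_le G hG ⟨i, hin⟩)] at hcd
        have hxieq : (((⟨i, hin⟩ : Fin (n+1)):ℕ):ℝ)*hgap = xi := by rw [hxidef]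
        rw [hxieq] at hcd
        have hq : |F xi - G xi| ≤ ε' :=
          hquant _ _ (hF'.nonneg ht0' xi) (hG'.nonneg ht0' xi) hcd
        have hFd : |F z - F xi| ≤ ε' := by
          have hb := hmod F hF xi z hxi0 hxi_le hzA hz_xi
          have hm : F z ≤ F xi := hF'.2.2.2.2.2.1 hxi0 hz0 hxi_le
          rw [abs_sub_comm, abs_of_nonneg (by linarith)]
          linarith
        have hGd : |G xi - G z| ≤ ε' := by
          have hb := hmod G hG xi z hxi0 hxi_le hzA hz_xi
          have hm : G z ≤ G xi := hG'.2.2.2.2.2.1 hxi0 hz0 hxi_le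
          rw [abs_of_nonneg (by linarith)]
          linarith
        calc |F z - G z| ≤ |F z - F xi| + |F xi - G z| := abs_sub_le _ _ _
          _ ≤ |F z - F xi| + (|F xi - G xi| + |G xi - G z|) := by
              linarith [abs_sub_le (F xi) (G xi) (G z)]
          _ ≤ 3*ε' := by linarith
      · have hzabs : A ≤ |z| := by rw [abs_of_nonneg hz0]; exact hzA.le
        have h1 : F z ≤ ε' := htail F hF z hzabs
        have h2 : G z ≤ ε' := htail G hG z hzabs
        have h3 : 0 ≤ F z := hF'.nonneg ht0' z
        have h4 : 0 ≤ G z := hG'.nonneg ht0' z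
        rw [abs_le]
        constructor <;> nlinarith
    set picker : (Fin (n+1) → Fin (m+1)) → (ℝ →ᵇ ℝ) := fun q =>
      if hq : ∃ F' ∈ S, code F' = q then hq.choose else 0 with hpickerdef
    refine ⟨picker '' Set.univ, Set.finite_univ.image _, ?_⟩
    intro F hF
    have hq : ∃ F' ∈ S, code F' = code F := ⟨F, hF, rfl⟩
    rw [Set.mem_iUnion₂]
    refine ⟨picker (code F), Set.mem_image_of_mem _ (Set.mem_univ _), ?_⟩
    rw [Metric.mem_ball]
    have hpick : picker (code F) = hq.choose := by rw [hpickerdef]; exact dif_pos hq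
    obtain ⟨hmem, hcodeq⟩ := hq.choose_spec
    have hd : dist F hq.choose ≤ 3*ε' := hkey F hq.choose hF hmem hcodeq.symm
    rw [hpick]
    have hlt : 3*ε' < ε := by rw [hε'def]; linarith
    linarith

  have hcomp : IsCompact S := htb.isCompact_of_isClosed hclosed
  refine ⟨hcomp, ?_⟩
  intro u hu
  set F : ℕ → ℝ →ᵇ ℝ := fun n =>
    BoundedContinuousFunction.ofNormedAddCommGroup (u n) (hu n).1
      ((hu n).2.1.choose) (fun x => by
        simpa [Real.norm_eq_abs] using (hu n).2.1.choose_spec x) with hFdef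
  have hcoe : ∀ n, ⇑(F n) = u n := fun n => rfl
  have hFS : ∀ n, F n ∈ S := fun n => by
    show W1 α t0 δl ⇑(F n)
    rw [hcoe n]; exact hu n
  obtain ⟨G, hGS, φ, hφ, hconv⟩ := hcomp.tendsto_subseq hFS
  refine ⟨⇑G, hGS, φ, hφ, ?_⟩
  have h2 := tendsto_iff_tendstoUniformly.mp hconv
  convert h2 using 1
  rfl

end GSQGhalfplane
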